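/- arXiv:1111.3212 — 14 statements merged into one kernel-verified Lean document; each statement's English description precedes it below -/
import Mathlib

section
/- Let X be an infinite set. The set of T1 topologies on X is closed in Top(X): the set {F ∈ Top(X) : the topology on X whose open sets form the family F is T1} is a closed subset of the subspace Top(X) of 2^{P(X)}. -/
/-- `Top(X)` as a subset of `2^{P(X)} = (Set X → Bool)`: the families of subsets
of `X` that are exactly the open sets of some topology on `X`. -/
def TopSet (X : Type*) : Set (Set X → Bool) :=
  {F | ∃ t : TopologicalSpace X, ∀ A : Set X, F A = true ↔ t.IsOpen A}

/-- for an infinite set `X`, the set of T1 topologies on `X` is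
closed in the subspace `Top(X)` of `2^{P(X)}`. -/
theorem t1_topologies_isClosed_in_TopSet (X : Type*) [Infinite X] :
    IsClosed {ρ : ↥(TopSet X) | ∃ t : TopologicalSpace X,
      (∀ A : Set X, ρ.val A = true ↔ t.IsOpen A) ∧ @T1Space X t} := by
  have key : {ρ : ↥(TopSet X) | ∃ t : TopologicalSpace X,
      (∀ A : Set X, ρ.val A = true ↔ t.IsOpen A) ∧ @T1Space X t}
      = ⋂ x : X, (fun ρ : ↥(TopSet X) => ρ.val ({x}ᶜ)) ⁻¹' {true} := by
    ext ρ
    simp only [Set.mem_iInter, Set.mem_setOf_eq, Set.mem_preimage, Set.mem_singleton_iff]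
    constructor
    · rintro ⟨t, ht, hT1⟩ x
      rw [ht]
      exact isOpen_compl_iff.mpr (@isClosed_singleton X t hT1 x)
    · intro h
      obtain ⟨t, ht⟩ := ρ.2
      refine ⟨t, ht, ?_⟩
      refine @T1Space.mk X t (fun x => ?_)
      exact isOpen_compl_iff.mp ((ht _).mp (h x))
  rw [key]
  exact isClosed_iInter fun x =>
    IsClosed.preimage ((continuous_apply _).comp continuous_subtype_val)
      (isClosed_discrete {true})
end

section
/- Let X be an infinite set, f : X → X a function and σ a topology on X. Then σ_f = {ρ ∈ Top(X) : f is continuous as a map from (X, σ) to (X, ρ)} is closed in Top(X) (closed in the subspace topology on Top(X)). -/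
/-- for an infinite set `X`, `f : X → X` and a topology `σ` on `X`,
the set `σ_f = {ρ ∈ Top(X) : f : (X,σ) → (X,ρ) is continuous}` is closed in the
subspace `Top(X)` of `2^{P(X)}`. -/
theorem sigma_sub_f_isClosed_in_TopSet (X : Type*) [Infinite X] (f : X → X)
    (σ : TopologicalSpace X) :
    IsClosed {ρ : ↥(TopSet X) | ∃ t : TopologicalSpace X,
      (∀ A : Set X, ρ.val A = true ↔ t.IsOpen A) ∧ @Continuous X X σ t f} := by
  have hset : {ρ : ↥(TopSet X) | ∃ t : TopologicalSpace X,
      (∀ A : Set X, ρ.val A = true ↔ t.IsOpen A) ∧ @Continuous X X σ t f}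
      = ⋂ A : Set X, {ρ : ↥(TopSet X) | ρ.val A = true → σ.IsOpen (f ⁻¹' A)} := by
    ext ρ
    simp only [Set.mem_setOf_eq, Set.mem_iInter]
    constructor
    · rintro ⟨t, ht, hc⟩ A hA
      exact (@continuous_def X X σ t f).mp hc A ((ht A).mp hA)
    · intro h
      obtain ⟨t, ht⟩ := ρ.2
      exact ⟨t, ht, (@continuous_def X X σ t f).mpr fun A hA => h A ((ht A).mpr hA)⟩
  rw [hset]
  refine isClosed_iInter fun A => ?_
  by_cases h : σ.IsOpen (f ⁻¹' A)
  · have : {ρ : ↥(TopSet X) | ρ.val A = true → σ.IsOpen (f ⁻¹' A)} = Set.univ := by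
      ext ρ; simp [h]
    rw [this]; exact isClosed_univ
  · have : {ρ : ↥(TopSet X) | ρ.val A = true → σ.IsOpen (f ⁻¹' A)}
        = (fun ρ : ↥(TopSet X) => ρ.val A) ⁻¹' {false} := by
      ext ρ
      simp only [Set.mem_setOf_eq, Set.mem_preimage, Set.mem_singleton_iff]
      cases hb : ρ.val A <;> simp [hb, h]
    rw [this]
    exact (isClosed_discrete _).preimage ((continuous_apply A).comp continuous_subtype_val)
end

section
/- Let X be an infinite set, f : X → X a function and σ a topology on X. Then σ^f = {ρ ∈ Top(X) : f is continuous as a map from (X, ρ) to (X, σ)} is closed in Top(X) (closed in the subspace topology on Top(X)). -/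
/-- for an infinite set `X`, `f : X → X` and a topology `σ` on `X`,
the set `σ^f = {ρ ∈ Top(X) : f : (X,ρ) → (X,σ) is continuous}` is closed in the
subspace `Top(X)` of `2^{P(X)}`. -/
theorem sigma_sup_f_isClosed_in_TopSet (X : Type*) [Infinite X] (f : X → X)
    (σ : TopologicalSpace X) :
    IsClosed {ρ : ↥(TopSet X) | ∃ t : TopologicalSpace X,
      (∀ A : Set X, ρ.val A = true ↔ t.IsOpen A) ∧ @Continuous X X t σ f} := by
  have hset : {ρ : ↥(TopSet X) | ∃ t : TopologicalSpace X,
      (∀ A : Set X, ρ.val A = true ↔ t.IsOpen A) ∧ @Continuous X X t σ f} =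
      ⋂ A ∈ {A : Set X | σ.IsOpen A},
        {ρ : ↥(TopSet X) | ρ.val (f ⁻¹' A) = true} := by
    ext ρ
    simp only [Set.mem_setOf_eq, Set.mem_iInter]
    constructor
    · rintro ⟨t, ht, hc⟩ A hA
      exact (ht _).mpr (@Continuous.isOpen_preimage _ _ t σ f hc A hA)
    · intro h
      obtain ⟨t, ht⟩ := ρ.2
      refine ⟨t, ht, continuous_def.mpr fun A hA => ?_⟩
      exact (ht _).mp (h A hA)
  rw [hset]
  refine isClosed_biInter fun A _ => ?_
  have : Continuous fun ρ : ↥(TopSet X) => ρ.val (f ⁻¹' A) :=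
    (continuous_apply _).comp continuous_subtype_val
  exact (isClosed_singleton (x := true)).preimage this
end

section
/- Let X be an infinite set and f : X → X a function. Then Cns(f) = {ρ ∈ Top(X) : f is continuous as a map from (X, ρ) to (X, ρ)} is closed in Top(X) (closed in the subspace topology on Top(X)). -/
/-- for an infinite set `X` and `f : X → X`, the set
`Cns(f) = {ρ ∈ Top(X) : f : (X,ρ) → (X,ρ) is continuous}` is closed in the
subspace `Top(X)` of `2^{P(X)}`. -/
theorem Cns_isClosed_in_TopSet (X : Type*) [Infinite X] (f : X → X) :
    IsClosed {ρ : ↥(TopSet X) | ∃ t : TopologicalSpace X,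
      (∀ A : Set X, ρ.val A = true ↔ t.IsOpen A) ∧ @Continuous X X t t f} := by
  have hS : IsClosed {F : Set X → Bool | ∀ A : Set X,
      F A = true → F (f ⁻¹' A) = true} := by
    have : {F : Set X → Bool | ∀ A : Set X, F A = true → F (f ⁻¹' A) = true}
        = ⋂ A : Set X, ((fun F : Set X → Bool => F A) ⁻¹' {true})ᶜ ∪
          ((fun F : Set X → Bool => F (f ⁻¹' A)) ⁻¹' {true}) := by
      ext F
      simp only [Set.mem_setOf_eq, Set.mem_iInter, Set.mem_union, Set.mem_compl_iff,
        Set.mem_preimage, Set.mem_singleton_iff]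
      exact forall_congr' fun A => by tauto
    rw [this]
    refine isClosed_iInter fun A => IsClosed.union ?_ ?_
    · exact (isOpen_discrete _).isClosed_compl.preimage (continuous_apply A)
    · exact (isClosed_discrete _).preimage (continuous_apply (f ⁻¹' A))
  have heq : {ρ : ↥(TopSet X) | ∃ t : TopologicalSpace X,
      (∀ A : Set X, ρ.val A = true ↔ t.IsOpen A) ∧ @Continuous X X t t f}
      = Subtype.val ⁻¹' {F : Set X → Bool | ∀ A : Set X,
        F A = true → F (f ⁻¹' A) = true} := by
    ext ρ
    constructor
    · rintro ⟨t, ht, hc⟩ A hA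
      exact (ht _).mpr (((@continuous_def X X t t f).mp hc) A ((ht A).mp hA))
    · intro h
      obtain ⟨t₀, ht₀⟩ := ρ.2
      refine ⟨t₀, ht₀, (@continuous_def X X t₀ t₀ f).mpr fun A hA => ?_⟩
      exact (ht₀ _).mp (h A ((ht₀ A).mpr hA))
  rw [heq]
  exact hS.preimage continuous_subtype_val
end

section
/- Let X be an infinite set and f : X → X a function. Then Open(f) = {ρ ∈ Top(X) : f is an open map from (X, ρ) to (X, ρ)} is closed in Top(X) (closed in the subspace topology on Top(X)). -/
/-- for an infinite set `X` and `f : X → X`, the set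
`Open(f) = {ρ ∈ Top(X) : f : (X,ρ) → (X,ρ) is an open map}` is closed in the
subspace `Top(X)` of `2^{P(X)}`. -/
theorem Open_isClosed_in_TopSet (X : Type*) [Infinite X] (f : X → X) :
    IsClosed {ρ : ↥(TopSet X) | ∃ t : TopologicalSpace X,
      (∀ A : Set X, ρ.val A = true ↔ t.IsOpen A) ∧ @IsOpenMap X X t t f} := by
  have hset : {ρ : ↥(TopSet X) | ∃ t : TopologicalSpace X,
      (∀ A : Set X, ρ.val A = true ↔ t.IsOpen A) ∧ @IsOpenMap X X t t f}
      = Subtype.val ⁻¹' (⋂ A : Set X,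
          {F : Set X → Bool | F A = true → F (f '' A) = true}) := by
    ext ρ
    simp only [Set.mem_setOf_eq, Set.mem_preimage, Set.mem_iInter]
    constructor
    · rintro ⟨t, ht, hopen⟩ A hA
      exact (ht _).mpr (hopen A ((ht A).mp hA))
    · intro h
      obtain ⟨t, ht⟩ := ρ.property
      refine ⟨t, ht, fun U hU => ?_⟩
      exact (ht _).mp (h U ((ht U).mpr hU))
  rw [hset]
  refine IsClosed.preimage continuous_subtype_val ?_
  refine isClosed_iInter fun A => ?_
  have : {F : Set X → Bool | F A = true → F (f '' A) = true}
      = {F : Set X → Bool | F A = true ∧ F (f '' A) ≠ true}ᶜ := by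
    ext F; simp [not_and_or, imp_iff_not_or, or_comm]
  rw [this]
  refine isClosed_compl_iff.mpr ?_
  have h1 : IsOpen ((fun F : Set X → Bool => F A) ⁻¹' {b | b = true}) :=
    (isOpen_discrete _).preimage (continuous_apply A)
  have h2 : IsOpen ((fun F : Set X → Bool => F (f '' A)) ⁻¹' {b | b ≠ true}) :=
    (isOpen_discrete _).preimage (continuous_apply (f '' A))
  exact h1.inter h2
end

section
/- Let X be an infinite set and f : X → X a function. Then Closed(f) = {ρ ∈ Top(X) : f is a closed map from (X, ρ) to (X, ρ)} is closed in Top(X) (closed in the subspace topology on Top(X)). -/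
/-- for an infinite set `X` and `f : X → X`, the set
`Closed(f) = {ρ ∈ Top(X) : f : (X,ρ) → (X,ρ) is a closed map}` is closed in the
subspace `Top(X)` of `2^{P(X)}`. -/
theorem Closed_isClosed_in_TopSet (X : Type*) [Infinite X] (f : X → X) :
    IsClosed {ρ : ↥(TopSet X) | ∃ t : TopologicalSpace X,
      (∀ A : Set X, ρ.val A = true ↔ t.IsOpen A) ∧ @IsClosedMap X X t t f} := by
  have key : {ρ : ↥(TopSet X) | ∃ t : TopologicalSpace X,
      (∀ A : Set X, ρ.val A = true ↔ t.IsOpen A) ∧ @IsClosedMap X X t t f} =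
      Subtype.val ⁻¹' (⋂ C : Set X,
        {F : Set X → Bool | F Cᶜ = true → F ((f '' C)ᶜ) = true}) := by
    ext ⟨F, hF⟩
    simp only [Set.mem_setOf_eq, Set.mem_preimage, Set.mem_iInter]
    constructor
    · rintro ⟨t, ht, hcl⟩ C hC
      have hCc : @IsClosed X t C := ⟨(ht _).mp hC⟩
      have : @IsClosed X t (f '' C) := hcl C hCc
      exact (ht _).mpr this.isOpen_compl
    · intro h
      obtain ⟨t, ht⟩ := hF
      refine ⟨t, ht, fun C hC => ?_⟩
      have := h C ((ht _).mpr hC.isOpen_compl)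
      exact ⟨(ht _).mp this⟩
  rw [key]
  refine IsClosed.preimage continuous_subtype_val (isClosed_iInter fun C => ?_)
  have : {F : Set X → Bool | F Cᶜ = true → F ((f '' C)ᶜ) = true} =
      {F : Set X → Bool | F Cᶜ = true}ᶜ ∪ {F : Set X → Bool | F ((f '' C)ᶜ) = true} := by
    ext F
    by_cases h1 : F Cᶜ = true <;> simp [h1]
  rw [this]
  have h2 : ∀ S : Set X, IsClosed {F : Set X → Bool | F S = true} := fun S => by
    have : {F : Set X → Bool | F S = true} = (fun F : Set X → Bool => F S) ⁻¹' {true} := rfl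
    rw [this]
    exact (isClosed_discrete _).preimage (continuous_apply S)
  have h3 : IsOpen {F : Set X → Bool | F Cᶜ = true} := by
    have : {F : Set X → Bool | F Cᶜ = true} = (fun F : Set X → Bool => F Cᶜ) ⁻¹' {true} := rfl
    rw [this]
    exact (isOpen_discrete _).preimage (continuous_apply Cᶜ)
  exact h3.isClosed_compl.union (h2 _)
end

section
/- Let Y be an infinite set and A, B ⊆ Y with B nonempty. Then the set [F_B^A]^{<ω} of graphs of finite partial functions from A to B is a proper dense subset of F_B^A (with the subspace topology induced from 2^{Y×Y}) if and only if A is infinite. -/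
/-- `F_B^A`: graphs of partial functions from `A` to `B`, inside `2^{Y×Y}`. -/
def PFunSet {Y : Type*} (A B : Set Y) : Set (Y × Y → Bool) :=
  {p | (∀ q : Y × Y, p q = true → q.1 ∈ A ∧ q.2 ∈ B) ∧
       ∀ a b b' : Y, p (a, b) = true → p (a, b') = true → b = b'}

/-- `[F_B^A]^{<ω}`: graphs of finite partial functions from `A` to `B`. -/
def FinPFunSet {Y : Type*} (A B : Set Y) : Set (Y × Y → Bool) :=
  {p | p ∈ PFunSet A B ∧ {q : Y × Y | p q = true}.Finite}

/-- for an infinite set `Y` and `A, B ⊆ Y` with `B` nonempty,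
`[F_B^A]^{<ω}` is a proper dense subset of `F_B^A` if and only if `A` is
infinite. -/
theorem finPFunSet_proper_dense_iff (Y : Type*) [Infinite Y] (A B : Set Y)
    (hB : B.Nonempty) :
    (FinPFunSet A B ⊂ PFunSet A B ∧ PFunSet A B ⊆ closure (FinPFunSet A B)) ↔
      A.Infinite := by
  classical
  constructor
  · rintro ⟨⟨_, hne⟩, _⟩
    obtain ⟨p, hp, hpf⟩ := Set.not_subset.1 hne
    have hsupp : {q : Y × Y | p q = true}.Infinite := by
      by_contra h
      exact hpf ⟨hp, Set.not_infinite.1 h⟩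
    have : Infinite {q : Y × Y // p q = true} := hsupp.to_subtype
    apply Set.infinite_of_injective_forall_mem
      (f := fun q : {q : Y × Y // p q = true} => q.1.1) ?_ ?_
    · rintro ⟨⟨a, b⟩, hq⟩ ⟨⟨a', b'⟩, hq'⟩ h
      simp only at h
      subst h
      have := hp.2 a b b' hq hq'
      simp [this]
    · intro q
      exact (hp.1 q.1 q.2).1
  · intro hA
    obtain ⟨b₀, hb₀⟩ := hB
    refine ⟨⟨fun p hp => hp.1, ?_⟩, ?_⟩
    · intro hsub
      set p₀ : Y × Y → Bool := fun q => decide (q.1 ∈ A ∧ q.2 = b₀) with hp₀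
      have hmem : p₀ ∈ PFunSet A B := by
        constructor
        · intro q hq
          rw [hp₀, decide_eq_true_iff] at hq
          exact ⟨hq.1, hq.2 ▸ hb₀⟩
        · intro a b b' h h'
          rw [hp₀, decide_eq_true_iff] at h h'
          exact h.2.trans h'.2.symm
      have hfin := (hsub hmem).2
      have heq : {q : Y × Y | p₀ q = true} = A ×ˢ {b₀} := by
        ext q
        simp only [hp₀, Set.mem_setOf_eq, decide_eq_true_iff, Set.mem_prod,
          Set.mem_singleton_iff]
      rw [heq, Set.prod_singleton] at hfin
      exact hA (Set.Finite.of_finite_image hfin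
        (Function.Injective.injOn (fun a a' h => (Prod.mk.injEq _ _ _ _ ▸ h).1)))
    · intro p hp
      rw [mem_closure_iff_nhds]
      intro t ht
      rw [nhds_pi, Filter.mem_pi] at ht
      obtain ⟨I, hI, u, hu, hsub⟩ := ht
      refine ⟨fun q => if q ∈ I then p q else false, hsub ?_, ⟨?_, ?_⟩, ?_⟩
      · intro i hi
        simp only [hi, if_true]
        exact mem_of_mem_nhds (hu i)
      · intro q hq
        by_cases h : q ∈ I
        · exact hp.1 q (by simpa [h] using hq)
        · simp [h] at hq
      · intro a b b' h h'
        by_cases h1 : (a, b) ∈ I <;> by_cases h2 : (a, b') ∈ I <;>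
          simp only [h1, h2, if_true, if_false] at h h' <;>
          first
            | exact hp.2 a b b' h h'
            | exact (Bool.false_ne_true h').elim
            | exact (Bool.false_ne_true h).elim
      · apply hI.subset
        intro q hq
        by_contra h
        simp [h] at hq
end

section
/- Let Y be an infinite set and A, B ⊆ Y with B nonempty. Then the space [F_B^A]^{<ω} of graphs of finite partial functions from A to B, with the subspace topology induced from 2^{Y×Y}, fails to be locally compact if and only if A is infinite. -/
open Set Topology Filter

lemma pFunSet_isClosed {Y : Type*} (A B : Set Y) : IsClosed (PFunSet A B) := by
  have heq : PFunSet A B =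
      (⋂ x : Y × Y, {p : Y × Y → Bool | p x = true → x.1 ∈ A ∧ x.2 ∈ B}) ∩
      (⋂ a : Y, ⋂ b : Y, ⋂ b' : Y,
        {p : Y × Y → Bool | p (a, b) = true → p (a, b') = true → b = b'}) := by
    ext p
    simp only [PFunSet, Set.mem_setOf_eq, Set.mem_inter_iff, Set.mem_iInter]
  rw [heq]
  apply IsClosed.inter
  · apply isClosed_iInter; intro x
    by_cases hx : x.1 ∈ A ∧ x.2 ∈ B
    · have : {p : Y × Y → Bool | p x = true → x.1 ∈ A ∧ x.2 ∈ B} = Set.univ := by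
        ext p; simp [hx]
      rw [this]; exact isClosed_univ
    · have : {p : Y × Y → Bool | p x = true → x.1 ∈ A ∧ x.2 ∈ B} =
          (fun p : Y × Y → Bool => p x) ⁻¹' {false} := by
        ext p; simp [hx]
      rw [this]
      exact (isClosed_discrete _).preimage (continuous_apply x)
  · apply isClosed_iInter; intro a
    apply isClosed_iInter; intro b1
    apply isClosed_iInter; intro b2
    by_cases hbb : b1 = b2
    · have : {p : Y × Y → Bool | p (a, b1) = true → p (a, b2) = true → b1 = b2} = Set.univ := by
        ext p; simp [hbb]
      rw [this]; exact isClosed_univ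
    · have : {p : Y × Y → Bool | p (a, b1) = true → p (a, b2) = true → b1 = b2} =
          ((fun p : Y × Y → Bool => p (a, b1)) ⁻¹' {true} ∩
            (fun p : Y × Y → Bool => p (a, b2)) ⁻¹' {true})ᶜ := by
        ext p; simp [hbb]
      rw [this]
      exact (((isOpen_discrete _).preimage (continuous_apply _)).inter
        ((isOpen_discrete _).preimage (continuous_apply _))).isClosed_compl

theorem finPFunSet_not_locallyCompact_iff (Y : Type*) [Infinite Y] (A B : Set Y)
    (hB : B.Nonempty) :
    ¬ LocallyCompactSpace ↥(FinPFunSet A B) ↔ A.Infinite := by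
  constructor
  · -- ¬LC → A infinite: contrapositive, A finite ⇒ compact ⇒ LC
    intro hnl
    by_contra hA
    rw [Set.not_infinite] at hA
    apply hnl
    have hset : FinPFunSet A B = PFunSet A B := by
      ext p
      refine ⟨fun h => h.1, fun hp => ⟨hp, ?_⟩⟩
      have hinj : Set.InjOn Prod.fst {q : Y × Y | p q = true} := by
        intro q1 h1 q2 h2 hfst
        have h1' : p (q1.1, q1.2) = true := by simpa using h1
        have h2' : p (q1.1, q2.2) = true := by rw [hfst]; simpa using h2
        have := hp.2 q1.1 q1.2 q2.2 h1' h2'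
        exact Prod.ext hfst this
      have himg : (Prod.fst '' {q : Y × Y | p q = true}).Finite :=
        hA.subset (by rintro _ ⟨q, hq, rfl⟩; exact (hp.1 q hq).1)
      exact Set.Finite.of_finite_image himg hinj
    rw [hset]
    haveI : CompactSpace ↥(PFunSet A B) :=
      isCompact_iff_compactSpace.mp (pFunSet_isClosed A B).isCompact
    infer_instance
  · -- A infinite ⇒ ¬LC
    intro hA hLC
    obtain ⟨b, hb⟩ := hB
    have hp0 : (fun _ => false : Y × Y → Bool) ∈ FinPFunSet A B := by
      refine ⟨⟨fun q hq => by simp at hq, fun a b b' h => by simp at h⟩, by simp⟩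
    obtain ⟨K, hKn, -, hKc⟩ :=
      hLC.local_compact_nhds (⟨_, hp0⟩ : ↥(FinPFunSet A B)) Set.univ Filter.univ_mem
    rw [nhds_subtype_eq_comap, Filter.mem_comap] at hKn
    obtain ⟨W, hW, hWK⟩ := hKn
    rw [nhds_pi, Filter.mem_pi] at hW
    obtain ⟨I, hIfin, t, ht, htW⟩ := hW
    set C := {p : Y × Y → Bool | ∀ x ∈ I, p x = false} with hCdef
    have hC : C ⊆ W := by
      intro p hp
      apply htW
      intro x hx
      have hpx : p x = false := hp x hx
      rw [hpx]
      exact mem_of_mem_nhds (ht x)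
    have hCK : C ∩ FinPFunSet A B ⊆ Subtype.val '' K := by
      rintro p ⟨hpC, hpF⟩
      exact ⟨⟨p, hpF⟩, hWK (hC hpC), rfl⟩
    have hKc' : IsCompact (Subtype.val '' K) := hKc.image continuous_subtype_val
    have hKcl : IsClosed (Subtype.val '' K) := hKc'.isClosed
    -- construct the bad point q
    have hfinb : {a : Y | (a, b) ∈ I}.Finite := by
      have : {a : Y | (a, b) ∈ I} = (fun a : Y => (a, b)) ⁻¹' I := rfl
      rw [this]
      exact Set.Finite.preimage
        (fun x _ y _ h => (Prod.ext_iff.mp h).1) hIfin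
    set A' := A \ {a : Y | (a, b) ∈ I} with hA'def
    have hA' : A'.Infinite := hA.diff hfinb
    classical
    set q : Y × Y → Bool := fun x => if x.1 ∈ A' ∧ x.2 = b then true else false with hqdef
    have hq_spec : ∀ x : Y × Y, q x = true ↔ (x.1 ∈ A' ∧ x.2 = b) := by
      intro x; simp [hqdef]
    have hqI : ∀ x ∈ I, q x = false := by
      intro x hx
      rw [Bool.eq_false_iff]
      intro hqx
      obtain ⟨h1, h2⟩ := (hq_spec x).mp hqx
      apply h1.2
      show (x.1, b) ∈ I
      have : (x.1, b) = x := by rw [← h2]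
      rw [this]; exact hx
    have hq_closure : q ∈ closure (C ∩ FinPFunSet A B) := by
      rw [mem_closure_iff]
      intro O hO hqO
      obtain ⟨J, u, hu, hsub⟩ := isOpen_pi_iff.mp hO q hqO
      set p : Y × Y → Bool := fun x => if x ∈ J then q x else false with hpdef
      have hp_spec : ∀ x : Y × Y, p x = true → q x = true := by
        intro x h
        by_cases hx : x ∈ J
        · have h' : (if x ∈ J then q x else false) = true := h
          rwa [if_pos hx] at h'
        · have h' : (if x ∈ J then q x else false) = true := h
          rw [if_neg hx] at h'
          exact absurd h' (by simp)
      refine ⟨p, hsub ?_, ?_, ?_, ?_⟩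
      · -- p ∈ J.pi u
        intro x hx
        have hxJ : x ∈ J := hx
        have : p x = q x := if_pos hxJ
        rw [this]
        exact (hu x hxJ).2
      · -- p ∈ C
        intro x hx
        by_cases hxJ : x ∈ J
        · show (if x ∈ J then q x else false) = false
          rw [if_pos hxJ]; exact hqI x hx
        · show (if x ∈ J then q x else false) = false
          rw [if_neg hxJ]
      · -- p ∈ PFunSet
        constructor
        · intro x hx
          obtain ⟨h1, h2⟩ := (hq_spec x).mp (hp_spec x hx)
          exact ⟨h1.1, h2 ▸ hb⟩
        · intro a b1 b2 h1 h2
          have e1 := ((hq_spec _).mp (hp_spec _ h1)).2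
          have e2 := ((hq_spec _).mp (hp_spec _ h2)).2
          simp only at e1 e2
          rw [e1, e2]
      · -- finite graph
        apply J.finite_toSet.subset
        intro x hx
        by_contra hxJ
        have hxJ' : x ∉ J := fun h => hxJ (Finset.mem_coe.mpr h)
        have hx' : (if x ∈ J then q x else false) = true := hx
        rw [if_neg hxJ'] at hx'
        exact absurd hx' (by simp)
    have hqK : q ∈ Subtype.val '' K := by
      have h1 := closure_mono hCK hq_closure
      rwa [hKcl.closure_eq] at h1
    have hqF : q ∈ FinPFunSet A B := by
      obtain ⟨x, -, hxq⟩ := hqK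
      rw [← hxq]
      exact x.2
    have hginf : {x : Y × Y | q x = true}.Infinite := by
      apply Set.Infinite.mono (s := (fun a : Y => (a, b)) '' A')
      · rintro _ ⟨a, ha, rfl⟩
        exact (hq_spec _).mpr ⟨ha, rfl⟩
      · exact hA'.image (fun x _ y _ h => (Prod.ext_iff.mp h).1)
    exact hginf hqF.2
end

section
/- Let Y be an infinite set and A, B ⊆ Y with B nonempty and the cardinality of B at most that of A. Then the set O_B^A of graphs of partial functions from A onto B is a proper dense subset of F_B^A (with the subspace topology induced from 2^{Y×Y}) if and only if A is infinite. -/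
/-- `O_B^A`: graphs of partial functions from `A` onto `B`. -/
def OntoPFunSet {Y : Type*} (A B : Set Y) : Set (Y × Y → Bool) :=
  {p | p ∈ PFunSet A B ∧ ∀ b ∈ B, ∃ a : Y, p (a, b) = true}

/-- for an infinite set `Y` and `A, B ⊆ Y` with `B` nonempty and
`|B| ≤ |A|`, the set `O_B^A` of graphs of partial functions from `A` onto `B`
is a proper dense subset of `F_B^A` if and only if `A` is infinite. -/
theorem ontoPFunSet_proper_dense_iff (Y : Type*) [Infinite Y] (A B : Set Y)
    (hB : B.Nonempty) (hcard : Cardinal.mk ↥B ≤ Cardinal.mk ↥A) :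
    (OntoPFunSet A B ⊂ PFunSet A B ∧ PFunSet A B ⊆ closure (OntoPFunSet A B)) ↔
      A.Infinite := by
  classical
  constructor
  · rintro ⟨hproper, hdense⟩
    by_contra hfin
    rw [Set.not_infinite] at hfin
    have hBfin : B.Finite := by
      rw [← Set.not_infinite]
      intro hBi
      haveI := hBi.to_subtype
      have : (Cardinal.mk ↥A) < Cardinal.aleph0 :=
        Cardinal.mk_lt_aleph0_iff.mpr hfin.to_subtype
      exact absurd (hcard.trans_lt this) (not_lt.mpr (Cardinal.aleph0_le_mk _))
    obtain ⟨p, hpF, hpO⟩ := Set.exists_of_ssubset hproper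
    have hSfin : (A ×ˢ B).Finite := hfin.prod hBfin
    set U : Set (Y × Y → Bool) := {q | ∀ x ∈ A ×ˢ B, q x = p x} with hUdef
    have hUopen : IsOpen U := by
      have : U = ⋂ x ∈ A ×ˢ B, {q : Y × Y → Bool | q x = p x} := by
        ext q; simp [hUdef]
      rw [this]
      refine hSfin.isOpen_biInter fun x _ => ?_
      show IsOpen ((fun q : Y × Y → Bool => q x) ⁻¹' {p x})
      exact IsOpen.preimage (continuous_apply x) (isOpen_discrete _)
    have hpU : p ∈ U := fun x _ => rfl
    obtain ⟨r, hrU, hrO⟩ := mem_closure_iff.mp (hdense hpF) U hUopen hpU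
    have hrp : r = p := by
      funext x
      by_cases hx : x ∈ A ×ˢ B
      · exact hrU x hx
      · have h1 : p x = false := by
          cases hpx : p x
          · rfl
          · exact absurd (Set.mem_prod.mpr (hpF.1 x hpx)) hx
        have h2 : r x = false := by
          cases hrx : r x
          · rfl
          · exact absurd (Set.mem_prod.mpr (hrO.1.1 x hrx)) hx
        rw [h1, h2]
      -- done
    exact hpO (hrp ▸ hrO)
  · intro hA
    constructor
    · refine ⟨fun q hq => hq.1, fun hsub => ?_⟩
      have h0 : (fun _ : Y × Y => false) ∈ PFunSet A B :=
        ⟨fun q hq => by simp at hq, fun a b b' h => by simp at h⟩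
      obtain ⟨b, hb⟩ := hB
      obtain ⟨a, ha⟩ := (hsub h0).2 b hb
      simp at ha
    · intro p hp
      rw [mem_closure_iff]
      intro U hUopen hpU
      obtain ⟨I, u, hI, hsub⟩ := isOpen_pi_iff.mp hUopen p hpU
      set T : Set Y := Prod.fst '' (I : Set (Y × Y)) with hTdef
      have hTfin : T.Finite := (I.finite_toSet).image _
      have hdiff : (A \ T).Infinite := hA.diff hTfin
      haveI : Infinite ↥(A \ T) := hdiff.to_subtype
      have hle : Cardinal.mk ↥B ≤ Cardinal.mk ↥(A \ T) := by
        refine hcard.trans ?_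
        calc Cardinal.mk ↥A ≤ Cardinal.mk ↥((A \ T) ∪ T) :=
              Cardinal.mk_le_mk_of_subset (by intro x hx; by_cases h : x ∈ T <;> simp [h, hx])
          _ ≤ Cardinal.mk ↥(A \ T) + Cardinal.mk ↥T := Cardinal.mk_union_le _ _
          _ ≤ Cardinal.mk ↥(A \ T) + Cardinal.mk ↥(A \ T) := by
              gcongr
              exact le_trans (le_of_lt (Cardinal.mk_lt_aleph0_iff.mpr hTfin.to_subtype))
                (Cardinal.aleph0_le_mk _)
          _ = Cardinal.mk ↥(A \ T) := Cardinal.add_eq_self (Cardinal.aleph0_le_mk _)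
      obtain ⟨e⟩ := Cardinal.le_def _ _ |>.mp hle
      set q : Y × Y → Bool := fun x =>
        decide ((x ∈ (I : Set (Y × Y)) ∧ p x = true) ∨ ∃ b : B, x = ((e b : Y), (b : Y)))
        with hqdef
      have hqtrue : ∀ x, q x = true ↔
          ((x ∈ (I : Set (Y × Y)) ∧ p x = true) ∨ ∃ b : B, x = ((e b : Y), (b : Y))) := by
        intro x; simp [hqdef]
      -- q agrees with p on I
      have hagree : ∀ x ∈ (I : Set (Y × Y)), q x = p x := by
        intro x hx
        cases hpx : p x
        · cases hqx : q x
          · rfl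
          · rcases (hqtrue x).mp hqx with ⟨_, h⟩ | ⟨b, hbx⟩
            · rw [hpx] at h; exact absurd h (by simp)
            · exfalso
              have : (e b : Y) ∈ T := ⟨x, hx, by rw [hbx]⟩
              exact (e b).2.2 this
        · exact (hqtrue x).mpr (Or.inl ⟨hx, hpx⟩)
      have hqO : q ∈ OntoPFunSet A B := by
        refine ⟨⟨?_, ?_⟩, ?_⟩
        · intro x hx
          rcases (hqtrue x).mp hx with ⟨_, h⟩ | ⟨b, hbx⟩
          · exact hp.1 x h
          · rw [hbx]; exact ⟨(e b).2.1, b.2⟩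
        · intro a b b' h h'
          rcases (hqtrue _).mp h with ⟨hmem, hpt⟩ | ⟨b0, hb0⟩ <;>
            rcases (hqtrue _).mp h' with ⟨hmem', hpt'⟩ | ⟨b1, hb1⟩
          · exact hp.2 a b b' hpt hpt'
          · exfalso
            have ha1 : a = (e b1 : Y) := congrArg Prod.fst hb1
            exact (e b1).2.2 ⟨(a, b), hmem, ha1⟩
          · exfalso
            have ha0 : a = (e b0 : Y) := congrArg Prod.fst hb0
            exact (e b0).2.2 ⟨(a, b'), hmem', ha0⟩
          · have ha0 : a = (e b0 : Y) := congrArg Prod.fst hb0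
            have ha1 : a = (e b1 : Y) := congrArg Prod.fst hb1
            have heq : e b0 = e b1 := Subtype.ext (ha0 ▸ ha1)
            have : b0 = b1 := e.injective heq
            have hb : b = (b0 : Y) := congrArg Prod.snd hb0
            have hb' : b' = (b1 : Y) := congrArg Prod.snd hb1
            rw [hb, hb', this]
        · intro b hb
          exact ⟨(e ⟨b, hb⟩ : Y), (hqtrue _).mpr (Or.inr ⟨⟨b, hb⟩, rfl⟩)⟩
      refine ⟨q, hsub fun x hx => ?_, hqO⟩
      rw [hagree x hx]
      exact (hI x hx).2
end

section
/- Let X be an infinite set. Then Lat(X,∨), the set of join complete sublattices of P(X), and Lat(X,∧), the set of meet complete sublattices of P(X), are each dense in Lat(X): the closure of Lat(X,∨) in 2^{P(X)} contains Lat(X), and likewise for Lat(X,∧). -/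
/-- `Lat(X)`: sublattices of `P(X)`, as points of `2^{P(X)}`. -/
def LatSet (X : Type*) : Set (Set X → Bool) :=
  {F | ∀ A B : Set X, F A = true → F B = true →
        F (A ∪ B) = true ∧ F (A ∩ B) = true}

/-- `Lat(X,∨)`: join complete sublattices of `P(X)`. -/
def LatJoinSet (X : Type*) : Set (Set X → Bool) :=
  {F | F ∈ LatSet X ∧ ∀ S : Set (Set X), S.Nonempty →
        (∀ A ∈ S, F A = true) → F (⋃₀ S) = true}

/-- `Lat(X,∧)`: meet complete sublattices of `P(X)`. -/
def LatMeetSet (X : Type*) : Set (Set X → Bool) :=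
  {F | F ∈ LatSet X ∧ ∀ S : Set (Set X), S.Nonempty →
        (∀ A ∈ S, F A = true) → F (⋂₀ S) = true}

/-- Key approximation lemma: any member of `Lat(X)` can be approximated on finitely
many coordinates by a finite sublattice, which is automatically join and meet complete. -/
theorem latSet_approx {X : Type*} (F : Set X → Bool) (hF : F ∈ LatSet X)
    (I : Finset (Set X)) :
    ∃ G : Set X → Bool, G ∈ LatJoinSet X ∧ G ∈ LatMeetSet X ∧ ∀ A ∈ I, G A = F A := by
  classical
  -- `T` is the sublattice of `P(X)` generated by `{A ∈ I | F A = true}`.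
  set T : Set (Set X) :=
    {A | ∃ 𝒮 : Finset (Finset (Set X)), 𝒮.Nonempty ∧
      (∀ s ∈ 𝒮, s.Nonempty ∧ ∀ B ∈ s, B ∈ I ∧ F B = true) ∧
      A = ⋃ s ∈ 𝒮, ⋂ B ∈ s, (B : Set X)} with hTdef
  -- F is true on every member of T
  have hFinter : ∀ s : Finset (Set X), ∀ _ : s.Nonempty, (∀ B ∈ s, F B = true) →
      F (⋂ B ∈ s, (B : Set X)) = true := by
    intro s hs
    induction hs using Finset.Nonempty.cons_induction with
    | singleton a => intro h; simpa using h a (by simp)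
    | cons a s ha hs ih =>
      intro h
      rw [Finset.cons_eq_insert, Finset.set_biInter_insert]
      exact (hF a _ (h a (by simp)) (ih fun B hB => h B (by simp [hB]))).2
  have hFunion : ∀ 𝒮 : Finset (Finset (Set X)), ∀ _ : 𝒮.Nonempty,
      (∀ s ∈ 𝒮, F (⋂ B ∈ s, (B : Set X)) = true) →
      F (⋃ s ∈ 𝒮, ⋂ B ∈ s, (B : Set X)) = true := by
    intro 𝒮 h𝒮
    induction h𝒮 using Finset.Nonempty.cons_induction with
    | singleton a => intro h; simpa using h a (by simp)
    | cons a 𝒮 ha h𝒮 ih =>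
      intro h
      rw [Finset.cons_eq_insert, Finset.set_biUnion_insert]
      exact (hF _ _ (h a (by simp)) (ih fun s hs => h s (by simp [hs]))).1
  have hFT : ∀ A ∈ T, F A = true := by
    rintro A ⟨𝒮, h𝒮ne, h𝒮, rfl⟩
    exact hFunion 𝒮 h𝒮ne fun s hs =>
      hFinter s (h𝒮 s hs).1 fun B hB => ((h𝒮 s hs).2 B hB).2
  -- T contains the true coordinates
  have hmem : ∀ A ∈ I, F A = true → A ∈ T := by
    intro A hA hFA
    exact ⟨{{A}}, by simp, by simp [hA, hFA], by simp⟩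
  -- T is closed under binary unions
  have hTunion : ∀ A ∈ T, ∀ B ∈ T, A ∪ B ∈ T := by
    rintro A ⟨𝒮, h𝒮ne, h𝒮, rfl⟩ B ⟨𝒯, h𝒯ne, h𝒯, rfl⟩
    refine ⟨𝒮 ∪ 𝒯, by simp [h𝒮ne.mono Finset.subset_union_left], ?_, ?_⟩
    · intro s hs
      rcases Finset.mem_union.1 hs with h | h
      exacts [h𝒮 s h, h𝒯 s h]
    · rw [Finset.set_biUnion_union]
  -- T is closed under binary intersections
  have hTinter : ∀ A ∈ T, ∀ B ∈ T, A ∩ B ∈ T := by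
    rintro A ⟨𝒮, h𝒮ne, h𝒮, rfl⟩ B ⟨𝒯, h𝒯ne, h𝒯, rfl⟩
    refine ⟨(𝒮 ×ˢ 𝒯).image fun p => p.1 ∪ p.2, ?_, ?_, ?_⟩
    · simpa [Finset.image_nonempty, Finset.nonempty_product] using ⟨h𝒮ne, h𝒯ne⟩
    · intro s hs
      simp only [Finset.mem_image, Finset.mem_product] at hs
      obtain ⟨⟨u, v⟩, ⟨hu, hv⟩, rfl⟩ := hs
      refine ⟨(h𝒮 u hu).1.mono Finset.subset_union_left, ?_⟩
      intro B hB
      rcases Finset.mem_union.1 hB with h | h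
      exacts [(h𝒮 u hu).2 B h, (h𝒯 v hv).2 B h]
    · ext x
      simp only [Set.mem_inter_iff, Set.mem_iUnion, Set.mem_iInter, Finset.mem_image,
        Finset.mem_product, exists_prop]
      constructor
      · rintro ⟨⟨u, hu, hxu⟩, ⟨v, hv, hxv⟩⟩
        refine ⟨u ∪ v, ⟨⟨u, v⟩, ⟨hu, hv⟩, rfl⟩, ?_⟩
        intro B hB
        rcases Finset.mem_union.1 hB with h | h
        exacts [hxu B h, hxv B h]
      · rintro ⟨s, ⟨⟨u, v⟩, ⟨hu, hv⟩, rfl⟩, hx⟩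
        exact ⟨⟨u, hu, fun B hB => hx B (Finset.mem_union_left _ hB)⟩,
               ⟨v, hv, fun B hB => hx B (Finset.mem_union_right _ hB)⟩⟩
  -- T is finite
  have hTfin : T.Finite := by
    apply Set.Finite.subset
      ((I.powerset.powerset.finite_toSet).image fun 𝒮 => ⋃ s ∈ 𝒮, ⋂ B ∈ s, (B : Set X))
    rintro A ⟨𝒮, _, h𝒮, rfl⟩
    exact ⟨𝒮, by
      simp only [Finset.coe_powerset, Set.mem_preimage, Set.mem_powerset_iff,
        Finset.coe_subset, Finset.mem_coe]
      intro s hs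
      simpa [Finset.subset_iff] using fun B hB => ((h𝒮 s hs).2 B hB).1, rfl⟩
  -- finite nonempty subfamilies of T have union and intersection in T
  have hsInterUnion : ∀ S : Set (Set X), S.Finite → S.Nonempty → S ⊆ T →
      ⋃₀ S ∈ T ∧ ⋂₀ S ∈ T := by
    intro S hfin
    refine Set.Finite.induction_on S hfin ?_ ?_
    · intro h; exact absurd h (by simp)
    · intro a s ha hs ih _ hsub
      have haT : a ∈ T := hsub (Set.mem_insert _ _)
      have hsT : s ⊆ T := fun x hx => hsub (Set.mem_insert_of_mem _ hx)
      rcases s.eq_empty_or_nonempty with rfl | hsne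
      · simp [haT]
      · obtain ⟨h1, h2⟩ := ih hsne hsT
        rw [Set.sUnion_insert, Set.sInter_insert]
        exact ⟨hTunion a haT _ h1, hTinter a haT _ h2⟩
  -- define G
  refine ⟨fun A => decide (A ∈ T), ?_, ?_, ?_⟩
  · refine ⟨?_, ?_⟩
    · intro A B hA hB
      simp only [decide_eq_true_eq] at *
      exact ⟨hTunion A hA B hB, hTinter A hA B hB⟩
    · intro S hSne hS
      simp only [decide_eq_true_eq] at *
      exact (hsInterUnion S (hTfin.subset hS) hSne hS).1
  · refine ⟨?_, ?_⟩
    · intro A B hA hB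
      simp only [decide_eq_true_eq] at *
      exact ⟨hTunion A hA B hB, hTinter A hA B hB⟩
    · intro S hSne hS
      simp only [decide_eq_true_eq] at *
      exact (hsInterUnion S (hTfin.subset hS) hSne hS).2
  · intro A hA
    rcases Bool.eq_false_or_eq_true (F A) with h | h
    · rw [h]
      simp only [decide_eq_true_eq]
      exact hmem A hA h
    · rw [h]
      simp only [decide_eq_false_iff_not]
      intro hAT
      rw [hFT A hAT] at h
      simp at h

theorem latSet_subset_closure {X : Type*} (D : Set (Set X → Bool))
    (h : ∀ F ∈ LatSet X, ∀ I : Finset (Set X), ∃ G ∈ D, ∀ A ∈ I, G A = F A) :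
    LatSet X ⊆ closure D := by
  intro F hF
  rw [mem_closure_iff]
  intro o ho hFo
  obtain ⟨I, u, hu, hsub⟩ := isOpen_pi_iff.1 ho F hFo
  obtain ⟨G, hGD, hGF⟩ := h F hF I
  refine ⟨G, hsub fun A hA => ?_, hGD⟩
  rw [hGF A hA]
  exact (hu A hA).2

/-- for an infinite set `X`, each of `Lat(X,∨)` and `Lat(X,∧)` is
dense in `Lat(X)`. -/
theorem latJoin_latMeet_dense_in_latSet (X : Type*) [Infinite X] :
    LatSet X ⊆ closure (LatJoinSet X) ∧ LatSet X ⊆ closure (LatMeetSet X) := by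
  constructor
  · refine latSet_subset_closure _ fun F hF I => ?_
    obtain ⟨G, hG1, _, hG3⟩ := latSet_approx F hF I
    exact ⟨G, hG1, hG3⟩
  · refine latSet_subset_closure _ fun F hF I => ?_
    obtain ⟨G, _, hG2, hG3⟩ := latSet_approx F hF I
    exact ⟨G, hG2, hG3⟩
end

section
/- Let X be an infinite set. Then LatB(X) is a closed (hence compact) subset of the product space 2^{P(X)}, Top(X) ⊆ LatB(X), and Top(X) is dense in LatB(X) (the closure of Top(X) in 2^{P(X)} contains LatB(X)); thus LatB(X) is a Hausdorff compactification of Top(X). -/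
/-- `LatB(X)`: sublattices of `P(X)` containing `∅` and `X`. -/
def LatBSet (X : Type*) : Set (Set X → Bool) :=
  {F | F ∅ = true ∧ F Set.univ = true ∧
       ∀ A B : Set X, F A = true → F B = true →
         F (A ∪ B) = true ∧ F (A ∩ B) = true}

section Aux
variable {X : Type*}

/-- finite intersections of subfamilies of `s`. -/
def latPi (s : Finset (Set X)) : Set (Set X) :=
  {C | ∃ v : Finset (Set X), ↑v ⊆ (↑s : Set (Set X)) ∧ C = ⋂₀ ↑v}

/-- unions of families of elements of `latPi s`. -/
def latOpens (s : Finset (Set X)) : Set (Set X) :=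
  {B | ∃ T : Set (Set X), T ⊆ latPi s ∧ B = ⋃₀ T}

lemma latPi_finite (s : Finset (Set X)) : (latPi s).Finite := by
  have hfin : ((fun v : Finset (Set X) => ⋂₀ (↑v : Set (Set X))) '' ↑s.powerset).Finite :=
    (s.powerset.finite_toSet).image _
  refine hfin.subset ?_
  rintro C ⟨v, hv, rfl⟩
  exact ⟨v, by simpa [Finset.mem_powerset] using hv, rfl⟩

/-- The topology whose opens are `latOpens s`. -/
def latTop (s : Finset (Set X)) : TopologicalSpace X where
  IsOpen B := B ∈ latOpens s
  isOpen_univ := by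
    refine ⟨{Set.univ}, ?_, by simp⟩
    rintro C rfl
    exact ⟨∅, by simp, by simp⟩
  isOpen_inter := by
    classical
    rintro B₁ B₂ ⟨T₁, hT₁, rfl⟩ ⟨T₂, hT₂, rfl⟩
    refine ⟨Set.image2 (· ∩ ·) T₁ T₂, ?_, ?_⟩
    · rintro C ⟨a, ha, b, hb, rfl⟩
      obtain ⟨v₁, hv₁, rfl⟩ := hT₁ ha
      obtain ⟨v₂, hv₂, rfl⟩ := hT₂ hb
      refine ⟨v₁ ∪ v₂, ?_, ?_⟩
      · rw [Finset.coe_union]; exact Set.union_subset hv₁ hv₂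
      · rw [Finset.coe_union, Set.sInter_union]
    · ext x
      simp only [Set.mem_inter_iff, Set.mem_sUnion, Set.mem_image2]
      constructor
      · rintro ⟨⟨a, ha, hxa⟩, ⟨b, hb, hxb⟩⟩
        exact ⟨a ∩ b, ⟨a, ha, b, hb, rfl⟩, hxa, hxb⟩
      · rintro ⟨c, ⟨a, ha, b, hb, rfl⟩, hxa, hxb⟩
        exact ⟨⟨a, ha, hxa⟩, ⟨b, hb, hxb⟩⟩
  isOpen_sUnion := by
    intro S hS
    choose T hT hB using hS
    refine ⟨⋃ (B : Set X) (h : B ∈ S), T B h, ?_, ?_⟩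
    · simp only [Set.iUnion_subset_iff]; exact hT
    · ext x
      simp only [Set.mem_sUnion, Set.mem_iUnion]
      constructor
      · rintro ⟨B, hBS, hxB⟩
        rw [hB B hBS] at hxB
        obtain ⟨c, hc, hxc⟩ := hxB
        exact ⟨c, ⟨B, hBS, hc⟩, hxc⟩
      · rintro ⟨c, ⟨B, hBS, hc⟩, hxc⟩
        exact ⟨B, hBS, by rw [hB B hBS]; exact ⟨c, hc, hxc⟩⟩

lemma F_sInter {F : Set X → Bool} (hF : F ∈ LatBSet X) (v : Finset (Set X))
    (hv : ∀ A ∈ v, F A = true) : F (⋂₀ ↑v) = true := by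
  classical
  induction v using Finset.induction with
  | empty => simpa using hF.2.1
  | @insert a w hni ih =>
      have h : (⋂₀ ↑(insert a w) : Set X) = a ∩ ⋂₀ ↑w := by
        rw [Finset.coe_insert, Set.sInter_insert]
      rw [h]
      exact (hF.2.2 a (⋂₀ ↑w) (hv a (by simp)) (ih fun A hA => hv A (by simp [hA]))).2

lemma F_sUnion {F : Set X → Bool} (hF : F ∈ LatBSet X) {T : Set (Set X)}
    (hfin : T.Finite) (hT : ∀ A ∈ T, F A = true) : F (⋃₀ T) = true := by
  classical
  obtain ⟨w, rfl⟩ : ∃ w : Finset (Set X), ↑w = T := hfin.exists_finset_coe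
  induction w using Finset.induction with
  | empty => simpa using hF.1
  | @insert a v hni ih =>
      have h : (⋃₀ ↑(insert a v) : Set X) = a ∪ ⋃₀ ↑v := by
        rw [Finset.coe_insert, Set.sUnion_insert]
      rw [h]
      exact (hF.2.2 a (⋃₀ ↑v) (hT a (by simp))
        (ih ((Finset.finite_toSet v)) (fun A hA => hT A (by simp [hA])))).1

lemma F_of_latOpen {F : Set X → Bool} (hF : F ∈ LatBSet X) {s : Finset (Set X)}
    (hs : ∀ A ∈ s, F A = true) {B : Set X} (hB : B ∈ latOpens s) : F B = true := by
  obtain ⟨T, hT, rfl⟩ := hB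
  refine F_sUnion hF ((latPi_finite s).subset hT) ?_
  intro A hA
  obtain ⟨v, hv, rfl⟩ := hT hA
  exact F_sInter hF v fun C hC => hs C (hv hC)

end Aux

/-- for an infinite set `X`, `LatB(X)` is closed (hence compact)
in `2^{P(X)}`, `Top(X) ⊆ LatB(X)`, and `Top(X)` is dense in `LatB(X)`; thus
`LatB(X)` is a Hausdorff compactification of `Top(X)`. -/
theorem latBSet_compactification_of_topSet (X : Type*) [Infinite X] :
    IsClosed (LatBSet X) ∧ IsCompact (LatBSet X) ∧
      TopSet X ⊆ LatBSet X ∧ LatBSet X ⊆ closure (TopSet X) := by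
  have hcl : ∀ A : Set X, IsClosed {F : Set X → Bool | F A = true} := by
    intro A
    have h : {F : Set X → Bool | F A = true} = (fun F : Set X → Bool => F A) ⁻¹' {true} := by
      ext F; simp
    rw [h]
    exact IsClosed.preimage (continuous_apply A) (isClosed_discrete ({true} : Set Bool))
  have hop : ∀ A : Set X, IsOpen {F : Set X → Bool | F A = true} := by
    intro A
    have h : {F : Set X → Bool | F A = true} = (fun F : Set X → Bool => F A) ⁻¹' {true} := by
      ext F; simp
    rw [h]
    exact IsOpen.preimage (continuous_apply A) (isOpen_discrete ({true} : Set Bool))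
  have hclosed : IsClosed (LatBSet X) := by
    have heq : LatBSet X = {F : Set X → Bool | F ∅ = true} ∩
        ({F : Set X → Bool | F Set.univ = true} ∩
        ⋂ (A : Set X), ⋂ (B : Set X),
          (({F : Set X → Bool | F A = true} ∩ {F | F B = true})ᶜ ∪
           ({F : Set X → Bool | F (A ∪ B) = true} ∩ {F | F (A ∩ B) = true}))) := by
      ext F
      simp only [LatBSet, Set.mem_setOf_eq, Set.mem_inter_iff, Set.mem_iInter,
        Set.mem_union, Set.mem_compl_iff, not_and]
      constructor
      · rintro ⟨h1, h2, h3⟩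
        refine ⟨h1, h2, fun A B => ?_⟩
        by_cases hA : F A = true
        · by_cases hB : F B = true
          · exact Or.inr ⟨(h3 A B hA hB).1, (h3 A B hA hB).2⟩
          · exact Or.inl (fun _ hB' => absurd hB' hB)
        · exact Or.inl (fun hA' => absurd hA' hA)
      · rintro ⟨h1, h2, h3⟩
        refine ⟨h1, h2, fun A B hA hB => ?_⟩
        rcases h3 A B with h | h
        · exact absurd hB (h hA)
        · exact h
    rw [heq]
    refine (hcl _).inter ((hcl _).inter ?_)
    refine isClosed_iInter fun A => isClosed_iInter fun B => ?_
    exact IsClosed.union (isClosed_compl_iff.2 ((hop A).inter (hop B)))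
      ((hcl _).inter (hcl _))
  refine ⟨hclosed, hclosed.isCompact, ?_, ?_⟩
  · rintro F ⟨t, ht⟩
    letI := t
    have ht' : ∀ A : Set X, F A = true ↔ IsOpen A := ht
    refine ⟨(ht' ∅).2 isOpen_empty, (ht Set.univ).2 isOpen_univ, fun A B hA hB => ?_⟩
    exact ⟨(ht' _).2 (((ht' A).1 hA).union ((ht' B).1 hB)),
      (ht' _).2 (((ht' A).1 hA).inter ((ht' B).1 hB))⟩
  · intro F hF
    rw [mem_closure_iff]
    intro o ho hFo
    obtain ⟨I, u, hu, hsub⟩ := isOpen_pi_iff.1 ho F hFo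
    classical
    set s : Finset (Set X) := I.filter (fun A => F A = true) with hs
    set G : Set X → Bool := fun A => decide (A ∈ latOpens s) with hG
    have hGmem : G ∈ TopSet X := by
      refine ⟨latTop s, fun A => ?_⟩
      rw [hG]
      simp only [decide_eq_true_iff]
      exact Iff.rfl
    have hagree : ∀ A ∈ I, G A = F A := by
      intro A hA
      by_cases hFA : F A = true
      · have hAs : A ∈ s := by simp [hs, hA, hFA]
        have hAP : A ∈ latPi s := ⟨{A}, by simpa using hAs, by simp⟩
        have hAO : A ∈ latOpens s := ⟨{A}, by rintro C rfl; exact hAP, by simp⟩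
        rw [hG, hFA]
        simpa using hAO
      · have hAO : A ∉ latOpens s := by
          intro hAop
          exact hFA (F_of_latOpen hF (fun C hC => (Finset.mem_filter.1 hC).2) hAop)
        have hFA' : F A = false := Bool.eq_false_iff.mpr hFA
        rw [hG, hFA']
        simpa using hAO
    refine ⟨G, hsub (fun A hA => ?_), hGmem⟩
    rw [hagree A (Finset.mem_coe.mp hA)]
    exact (hu A (Finset.mem_coe.mp hA)).2
end

section
/- Let X be an infinite set. Then the closure of Top(X) in the product space 2^{P(X)} is exactly LatB(X); in particular Top(X) is a proper subset of LatB(X), Top(X) is not closed in 2^{P(X)}, and Top(X) is not a compact subset of 2^{P(X)}. -/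
/-- for an infinite set `X`, the closure of `Top(X)` in
`2^{P(X)}` is exactly `LatB(X)`; in particular `Top(X)` is a proper subset of
`LatB(X)`, and `Top(X)` is neither closed nor compact in `2^{P(X)}`. -/
theorem closure_topSet_eq_latBSet (X : Type*) [Infinite X] :
    closure (TopSet X) = LatBSet X ∧ TopSet X ⊂ LatBSet X ∧
      ¬ IsClosed (TopSet X) ∧ ¬ IsCompact (TopSet X) := by
  classical
  -- `Top(X) ⊆ LatB(X)`
  have hsub : TopSet X ⊆ LatBSet X := by
    rintro F ⟨t, ht⟩
    letI := t
    refine ⟨(ht _).mpr isOpen_empty, (ht _).mpr isOpen_univ, fun A B hA hB => ?_⟩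
    have hA' : IsOpen A := (ht A).mp hA
    have hB' : IsOpen B := (ht B).mp hB
    exact ⟨(ht _).mpr (hA'.union hB'), (ht _).mpr (hA'.inter hB')⟩
  -- `LatB(X)` is closed
  have key : ∀ (A : Set X) (s : Set Bool), IsClosed {F : Set X → Bool | F A ∈ s} :=
    fun A s => (isClosed_discrete s).preimage (continuous_apply A)
  have hLclosed : IsClosed (LatBSet X) := by
    have heq : LatBSet X =
        {F : Set X → Bool | F ∅ ∈ ({true} : Set Bool)} ∩
          {F : Set X → Bool | F Set.univ ∈ ({true} : Set Bool)} ∩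
          ⋂ (A : Set X) (B : Set X),
            ({F : Set X → Bool | F A ∈ (({true} : Set Bool)ᶜ)} ∪
              {F : Set X → Bool | F B ∈ (({true} : Set Bool)ᶜ)} ∪
              ({F : Set X → Bool | F (A ∪ B) ∈ ({true} : Set Bool)} ∩
               {F : Set X → Bool | F (A ∩ B) ∈ ({true} : Set Bool)})) := by
      ext F
      simp only [LatBSet, Set.mem_setOf_eq, Set.mem_inter_iff, Set.mem_iInter,
        Set.mem_union, Set.mem_singleton_iff, Set.mem_compl_iff]
      constructor
      · rintro ⟨h1, h2, h3⟩
        exact ⟨⟨h1, h2⟩, fun A B => by have := h3 A B; tauto⟩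
      · rintro ⟨⟨h1, h2⟩, h3⟩
        exact ⟨h1, h2, fun A B hA hB => by have := h3 A B; tauto⟩
    rw [heq]
    exact ((key _ _).inter (key _ _)).inter (isClosed_iInter fun A =>
      isClosed_iInter fun B =>
        (((key _ _).union (key _ _)).union ((key _ _).inter (key _ _))))
  -- Density: every member of `LatB(X)` is in the closure of `Top(X)`.
  have hdense : ∀ F ∈ LatBSet X, F ∈ closure (TopSet X) := by
    rintro F ⟨hemp, huniv, hlat⟩
    rw [mem_closure_iff]
    rintro o ho hFo
    obtain ⟨I, u, hu, hsub'⟩ := isOpen_pi_iff.mp ho F hFo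
    set G : Finset (Set X) := I.filter (fun A => F A = true) with hG
    -- lattice closure lemmas for `F`
    have hInter : ∀ J : Finset (Set X), (∀ B ∈ J, F B = true) → F (⋂₀ ↑J) = true := by
      intro J
      induction J using Finset.induction_on with
      | empty => intro _; simpa using huniv
      | @insert a s ha ih =>
        intro hmem
        rw [Finset.coe_insert, Set.sInter_insert]
        exact (hlat _ _ (hmem a (Finset.mem_insert_self a s))
          (ih fun B hB => hmem B (Finset.mem_insert_of_mem hB))).2
    have hUnion : ∀ J : Finset (Set X), (∀ B ∈ J, F B = true) → F (⋃₀ ↑J) = true := by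
      intro J
      induction J using Finset.induction_on with
      | empty => intro _; simpa using hemp
      | @insert a s ha ih =>
        intro hmem
        rw [Finset.coe_insert, Set.sUnion_insert]
        exact (hlat _ _ (hmem a (Finset.mem_insert_self a s))
          (ih fun B hB => hmem B (Finset.mem_insert_of_mem hB))).1
    -- the topology generated by the "true" coordinates
    let t : TopologicalSpace X :=
      { IsOpen := fun U => ∀ x ∈ U, ∃ J : Finset (Set X), J ⊆ G ∧ x ∈ ⋂₀ ↑J ∧ ⋂₀ ↑J ⊆ U
        isOpen_univ := fun x _ => ⟨∅, by simp⟩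
        isOpen_inter := by
          rintro U V hU hV x ⟨hxU, hxV⟩
          obtain ⟨J₁, hJ₁, hx₁, hs₁⟩ := hU x hxU
          obtain ⟨J₂, hJ₂, hx₂, hs₂⟩ := hV x hxV
          refine ⟨J₁ ∪ J₂, Finset.union_subset hJ₁ hJ₂, ?_, ?_⟩
          · rw [Finset.coe_union, Set.sInter_union]; exact ⟨hx₁, hx₂⟩
          · rw [Finset.coe_union, Set.sInter_union]
            exact fun y hy => ⟨hs₁ hy.1, hs₂ hy.2⟩
        isOpen_sUnion := by
          rintro S hS x ⟨U, hU, hxU⟩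
          obtain ⟨J, hJ, hxJ, hsJ⟩ := hS U hU x hxU
          exact ⟨J, hJ, hxJ, hsJ.trans (Set.subset_sUnion_of_mem hU)⟩ }
    -- if `A` is `t`-open then `F A = true`
    have hopen_true : ∀ A : Set X, t.IsOpen A → F A = true := by
      intro A hA
      set T : Finset (Finset (Set X)) :=
        G.powerset.filter (fun J => ⋂₀ (↑J : Set (Set X)) ⊆ A) with hT
      have hA_eq : A = ⋃ J ∈ T, ⋂₀ (↑J : Set (Set X)) := by
        apply Set.Subset.antisymm
        · intro x hx
          obtain ⟨J, hJ, hxJ, hsJ⟩ := hA x hx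
          exact Set.mem_biUnion
            (Finset.mem_filter.mpr ⟨Finset.mem_powerset.mpr hJ, hsJ⟩) hxJ
        · intro x hx
          obtain ⟨J, hJ, hxJ⟩ := Set.mem_iUnion₂.mp hx
          exact (Finset.mem_filter.mp hJ).2 hxJ
      rw [hA_eq]
      have main : ∀ T' : Finset (Finset (Set X)), T' ⊆ T →
          F (⋃ J ∈ T', ⋂₀ (↑J : Set (Set X))) = true := by
        intro T'
        induction T' using Finset.induction_on with
        | empty => intro _; simpa using hemp
        | @insert a s ha ih =>
          intro hsub''
          rw [Finset.set_biUnion_insert]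
          have haG : a ⊆ G :=
            Finset.mem_powerset.mp
              (Finset.mem_filter.mp (hsub'' (Finset.mem_insert_self a s))).1
          refine (hlat _ _ ?_ (ih fun J hJ => hsub'' (Finset.mem_insert_of_mem hJ))).1
          exact hInter a fun B hB => (Finset.mem_filter.mp (haG hB)).2
      exact main T (Finset.Subset.refl T)
    -- `F`-true coordinates are `t`-open
    have htrue_open : ∀ A ∈ I, F A = true → t.IsOpen A := by
      intro A hAI hAF x hx
      refine ⟨{A}, ?_, ?_, ?_⟩
      · intro B hB
        rw [Finset.mem_singleton] at hB
        subst hB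
        exact Finset.mem_filter.mpr ⟨hAI, hAF⟩
      · simpa using hx
      · simp
    -- the point of `Top(X)` approximating `F`
    let g : Set X → Bool := fun A => decide (t.IsOpen A)
    have hg : ∀ A : Set X, g A = true ↔ t.IsOpen A := fun A => decide_eq_true_iff
    have hagree : ∀ A ∈ I, g A = F A := by
      intro A hAI
      cases hb : F A with
      | true => exact (hg A).mpr (htrue_open A hAI hb)
      | false =>
        have hnot : ¬ t.IsOpen A := fun h => by
          rw [hopen_true A h] at hb; exact Bool.noConfusion hb
        exact decide_eq_false hnot
    refine ⟨g, hsub' ?_, ⟨t, hg⟩⟩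
    intro A hAI
    rw [hagree A hAI]
    exact (hu A hAI).2
  -- the counterexample: finite sets together with `univ`
  let F₀ : Set X → Bool := fun A => decide (A.Finite ∨ A = Set.univ)
  have hF₀ : ∀ A : Set X, F₀ A = true ↔ (A.Finite ∨ A = Set.univ) :=
    fun A => decide_eq_true_iff
  have hF₀latb : F₀ ∈ LatBSet X := by
    refine ⟨(hF₀ _).mpr (Or.inl Set.finite_empty), (hF₀ _).mpr (Or.inr rfl),
      fun A B hA hB => ?_⟩
    rcases (hF₀ _).mp hA with hA | hA <;> rcases (hF₀ _).mp hB with hB | hB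
    · exact ⟨(hF₀ _).mpr (Or.inl (hA.union hB)),
        (hF₀ _).mpr (Or.inl (hA.inter_of_left B))⟩
    · subst hB
      exact ⟨(hF₀ _).mpr (Or.inr (by simp)), (hF₀ _).mpr (Or.inl (by simpa using hA))⟩
    · subst hA
      exact ⟨(hF₀ _).mpr (Or.inr (by simp)), (hF₀ _).mpr (Or.inl (by simpa using hB))⟩
    · subst hA; subst hB
      exact ⟨(hF₀ _).mpr (Or.inr (by simp)), (hF₀ _).mpr (Or.inr (by simp))⟩
  have hF₀notTop : F₀ ∉ TopSet X := by
    rintro ⟨t, ht⟩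
    letI := t
    obtain ⟨x₀⟩ : Nonempty X := inferInstance
    have hsing : ∀ x : X, IsOpen ({x} : Set X) := fun x =>
      (ht {x}).mp ((hF₀ _).mpr (Or.inl (Set.finite_singleton x)))
    have hY : IsOpen ({x₀}ᶜ : Set X) := by
      have hrw : ({x₀}ᶜ : Set X) = ⋃ x ∈ ({x₀}ᶜ : Set X), {x} :=
        (Set.biUnion_of_singleton _).symm
      rw [hrw]
      exact isOpen_biUnion fun x _ => hsing x
    rcases (hF₀ _).mp ((ht _).mpr hY) with h | h
    · have hfin : (Set.univ : Set X).Finite := by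
        have huv : ({x₀}ᶜ ∪ {x₀} : Set X) = Set.univ := Set.compl_union_self _
        rw [← huv]
        exact h.union (Set.finite_singleton x₀)
      exact Set.infinite_univ hfin
    · have : x₀ ∈ ({x₀}ᶜ : Set X) := h ▸ Set.mem_univ x₀
      simp at this
  -- assemble everything
  have hclos : closure (TopSet X) = LatBSet X :=
    Set.Subset.antisymm (closure_minimal hsub hLclosed) (fun F hF => hdense F hF)
  have hss : TopSet X ⊂ LatBSet X := ⟨hsub, fun h => hF₀notTop (h hF₀latb)⟩
  have hnc : ¬ IsClosed (TopSet X) := fun h => hss.ne (by rw [← h.closure_eq, hclos])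
  exact ⟨hclos, hss, hnc, fun h => hnc h.isClosed⟩
end

section
/- Let X be an infinite set. Then Top(X) has empty interior in the subspace LatB(X) of 2^{P(X)}: equivalently, LatB(X) \ Top(X) is dense in LatB(X), i.e. every nonempty relatively open subset of LatB(X) contains a point of LatB(X) that is not in Top(X). -/
open Set

/-- The lattice (with `∅`, `univ`) generated by a family of sets. -/
inductive GenLat {X : Type*} (S : Set (Set X)) : Set X → Prop
  | base {A} : A ∈ S → GenLat S A
  | empty : GenLat S ∅
  | univ : GenLat S Set.univ
  | union {A B} : GenLat S A → GenLat S B → GenLat S (A ∪ B)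
  | inter {A B} : GenLat S A → GenLat S B → GenLat S (A ∩ B)

lemma genLat_atom {X : Type*} {S : Set (Set X)} {Y : Set X}
    (hS : ∀ A ∈ S, Y ⊆ A ∨ A ∩ Y = ∅) {B : Set X} (hB : GenLat S B) :
    Y ⊆ B ∨ B ∩ Y = ∅ := by
  induction hB with
  | base h => exact hS _ h
  | empty => exact Or.inr (by simp)
  | univ => exact Or.inl (by simp)
  | union h1 h2 ih1 ih2 =>
      rcases ih1 with h | h
      · exact Or.inl (h.trans subset_union_left)
      · rcases ih2 with h' | h'
        · exact Or.inl (h'.trans subset_union_right)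
        · right; rw [union_inter_distrib_right, h, h', union_empty]
  | inter h1 h2 ih1 ih2 =>
      rcases ih1 with h | h
      · rcases ih2 with h' | h'
        · exact Or.inl (subset_inter h h')
        · right; rw [inter_assoc, h', inter_empty]
      · right
        rw [eq_empty_iff_forall_notMem] at h ⊢
        intro x hx; exact h x ⟨hx.1.1, hx.2⟩

lemma genLat_true {X : Type*} {F : Set X → Bool} (hF : F ∈ LatBSet X)
    {S : Set (Set X)} (hS : ∀ A ∈ S, F A = true) {B : Set X} (hB : GenLat S B) :
    F B = true := by
  induction hB with
  | base h => exact hS _ h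
  | empty => exact hF.1
  | univ => exact hF.2.1
  | union h1 h2 ih1 ih2 => exact (hF.2.2 _ _ ih1 ih2).1
  | inter h1 h2 ih1 ih2 => exact (hF.2.2 _ _ ih1 ih2).2

/-- for an infinite set `X`, `Top(X)` has empty interior in the
subspace `LatB(X)` of `2^{P(X)}`. -/
theorem topSet_interior_empty_in_latBSet (X : Type*) [Infinite X] :
    interior {ρ : ↥(LatBSet X) | ρ.val ∈ TopSet X} = ∅ := by
  classical
  rw [Set.eq_empty_iff_forall_notMem]
  rintro ⟨F, hFlat⟩ hρ
  rw [mem_interior_iff_mem_nhds, nhds_induced, Filter.mem_comap] at hρ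
  obtain ⟨V, hV, hVsub⟩ := hρ
  rw [nhds_pi, Filter.mem_pi] at hV
  obtain ⟨I, hIfin, t, ht, hpi⟩ := hV
  simp only [nhds_discrete, Filter.mem_pure] at ht
  have hIfinite : Finite ↥I := hIfin.to_subtype
  obtain ⟨v, hv⟩ := Finite.exists_infinite_fiber
    (fun x : X => fun A : ↥I => decide (x ∈ (A : Set X)))
  set f : X → (↥I → Bool) := fun x => fun A : ↥I => decide (x ∈ (A : Set X)) with hf
  set Y : Set X := f ⁻¹' {v} with hY
  have hYinf : Y.Infinite := Set.infinite_coe_iff.mp hv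
  have hatom : ∀ A ∈ I, Y ⊆ A ∨ A ∩ Y = ∅ := by
    intro A hA
    by_cases hvA : v ⟨A, hA⟩ = true
    · left; intro x hx
      have h : decide (x ∈ A) = v ⟨A, hA⟩ := congrFun (Set.mem_singleton_iff.mp hx) ⟨A, hA⟩
      rw [hvA] at h
      exact of_decide_eq_true h
    · right
      rw [eq_empty_iff_forall_notMem]
      rintro x ⟨hxA, hxY⟩
      have h : decide (x ∈ A) = v ⟨A, hA⟩ := congrFun (Set.mem_singleton_iff.mp hxY) ⟨A, hA⟩
      rw [decide_eq_true hxA] at h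
      exact hvA h.symm
  -- a strictly increasing chain of finite subsets of Y
  set y : ℕ → X := fun n => ((Set.Infinite.natEmbedding Y hYinf) n).1 with hy
  have hyY : ∀ n, y n ∈ Y := fun n => ((Set.Infinite.natEmbedding Y hYinf) n).2
  have hyinj : Function.Injective y :=
    fun a b h => (Set.Infinite.natEmbedding Y hYinf).injective (Subtype.ext h)
  set C : ℕ → Set X := fun n => y '' Set.Icc 1 n with hCdef
  have hC0 : C 0 = ∅ := by
    simp [hCdef, Set.Icc_eq_empty (by norm_num : ¬(1:ℕ) ≤ 0)]
  have hCY : ∀ n, C n ⊆ Y := by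
    rintro n x ⟨k, _, rfl⟩; exact hyY k
  have hCmono : ∀ {m n : ℕ}, m ≤ n → C m ⊆ C n := by
    intro m n h
    exact Set.image_mono (Set.Icc_subset_Icc_right h)
  have hy0C : ∀ n, y 0 ∉ C n := by
    rintro n ⟨k, hk, hEq⟩
    simp only [Set.mem_Icc] at hk
    have := hyinj hEq
    omega
  have hCfin : ∀ n, (C n).Finite := fun n => (Set.finite_Icc _ _).image _
  have hCC : ∀ m n : ℕ, C m ∪ C n = C (max m n) := by
    intro m n; rcases le_total m n with h | h
    · rw [union_eq_right.mpr (hCmono h), max_eq_right h]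
    · rw [union_eq_left.mpr (hCmono h), max_eq_left h]
  have hCCi : ∀ m n : ℕ, C m ∩ C n = C (min m n) := by
    intro m n; rcases le_total m n with h | h
    · rw [inter_eq_left.mpr (hCmono h), min_eq_left h]
    · rw [inter_eq_right.mpr (hCmono h), min_eq_right h]
  set S : Set (Set X) := {A | A ∈ I ∧ F A = true} with hS
  have hSatom : ∀ A ∈ S, Y ⊆ A ∨ A ∩ Y = ∅ := fun A hA => hatom A hA.1
  have hStrue : ∀ A ∈ S, F A = true := fun A hA => hA.2
  have hBatom : ∀ {B : Set X}, GenLat S B → Y ⊆ B ∨ B ∩ Y = ∅ :=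
    fun hB => genLat_atom hSatom hB
  have hBC : ∀ {B : Set X}, GenLat S B → ∀ n, B ∩ C n = ∅ ∨ B ∩ C n = C n := by
    intro B hB n
    rcases hBatom hB with h | h
    · exact Or.inr (inter_eq_right.mpr ((hCY n).trans h))
    · left
      rw [eq_empty_iff_forall_notMem] at h ⊢
      rintro x ⟨hxB, hxC⟩; exact h x ⟨hxB, hCY n hxC⟩
  set G : Set X → Bool := fun A => decide (∃ B n, GenLat S B ∧ A = B ∪ C n) with hG
  have hGiff : ∀ A, G A = true ↔ ∃ B n, GenLat S B ∧ A = B ∪ C n := by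
    intro A; rw [hG]; simp
  have hGlat : G ∈ LatBSet X := by
    refine ⟨?_, ?_, ?_⟩
    · exact (hGiff _).mpr ⟨∅, 0, GenLat.empty, by rw [hC0]; simp⟩
    · exact (hGiff _).mpr ⟨Set.univ, 0, GenLat.univ, by rw [hC0]; simp⟩
    · intro A B hA hB
      obtain ⟨B1, m, h1, rfl⟩ := (hGiff _).mp hA
      obtain ⟨B2, n, h2, rfl⟩ := (hGiff _).mp hB
      constructor
      · refine (hGiff _).mpr ⟨B1 ∪ B2, max m n, h1.union h2, ?_⟩
        rw [Set.union_union_union_comm, hCC]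
      · have hd : (B1 ∪ C m) ∩ (B2 ∪ C n)
            = (B1 ∩ B2) ∪ ((B1 ∩ C n) ∪ ((B2 ∩ C m) ∪ (C m ∩ C n))) := by
          ext x; simp only [mem_inter_iff, mem_union]; tauto
        rcases hBC h1 n with e1 | e1 <;> rcases hBC h2 m with e2 | e2
        · refine (hGiff _).mpr ⟨B1 ∩ B2, min m n, h1.inter h2, ?_⟩
          rw [hd, e1, e2, hCCi, empty_union, empty_union]
        · refine (hGiff _).mpr ⟨B1 ∩ B2, m, h1.inter h2, ?_⟩
          rw [hd, e1, e2, hCCi, empty_union,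
            union_eq_left.mpr (hCmono (min_le_left m n))]
        · refine (hGiff _).mpr ⟨B1 ∩ B2, n, h1.inter h2, ?_⟩
          rw [hd, e1, e2, hCCi, empty_union,
            union_eq_left.mpr (hCmono (min_le_right m n))]
        · refine (hGiff _).mpr ⟨B1 ∩ B2, max m n, h1.inter h2, ?_⟩
          rw [hd, e1, e2, hCCi,
            union_eq_left.mpr (hCmono (min_le_left m n)), hCC n m, max_comm]
  have hagree : ∀ A ∈ I, G A = F A := by
    intro A hA
    cases hFA : F A with
    | true => exact (hGiff _).mpr ⟨A, 0, GenLat.base ⟨hA, hFA⟩, by rw [hC0]; simp⟩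
    | false =>
      rw [hG]
      simp only [decide_eq_false_iff_not]
      rintro ⟨B, n, hB, hEq⟩
      rcases hatom A hA with hYA | hYA
      · have hy0A : y 0 ∈ B := by
          have h0 : y 0 ∈ A := hYA (hyY 0)
          rw [hEq] at h0
          rcases h0 with h | h
          · exact h
          · exact absurd h (hy0C n)
        rcases hBatom hB with hYB | hYB
        · have hFA' : F A = true := by
            rw [hEq, union_eq_left.mpr ((hCY n).trans hYB)]
            exact genLat_true hFlat hStrue hB
          rw [hFA] at hFA'; exact absurd hFA' (by simp)
        · rw [eq_empty_iff_forall_notMem] at hYB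
          exact hYB (y 0) ⟨hy0A, hyY 0⟩
      · have hCn : C n = ∅ := by
          rw [eq_empty_iff_forall_notMem]
          intro x hx
          rw [eq_empty_iff_forall_notMem] at hYA
          exact hYA x ⟨hEq ▸ Or.inr hx, hCY n hx⟩
        have hFA' : F A = true := by
          rw [hEq, hCn, union_empty]
          exact genLat_true hFlat hStrue hB
        rw [hFA] at hFA'; exact absurd hFA' (by simp)
  have hGpi : G ∈ I.pi t := by
    intro A hA
    rw [hagree A hA]; exact ht A
  have hGTop : G ∈ TopSet X := hVsub (show (⟨G, hGlat⟩ : ↥(LatBSet X)) ∈ _ from hpi hGpi)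
  obtain ⟨tp, htp⟩ := hGTop
  have hCopen : ∀ n, tp.IsOpen (C n) :=
    fun n => (htp _).mp ((hGiff _).mpr ⟨∅, n, GenLat.empty, (empty_union _).symm⟩)
  have hU : tp.IsOpen (⋃ n, C n) := by letI := tp; exact isOpen_iUnion hCopen
  obtain ⟨B, n, hB, hEq⟩ := (hGiff _).mp ((htp _).mpr hU)
  have hUY : (⋃ n, C n) ⊆ Y := iUnion_subset hCY
  have hBU : B ⊆ ⋃ n, C n := hEq ▸ subset_union_left
  have hUinf : (⋃ n, C n).Infinite := by
    refine Set.infinite_of_injective_forall_mem (f := fun k : ℕ => y (k + 1)) ?_ ?_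
    · intro a b h
      have := hyinj h
      omega
    · intro k
      exact mem_iUnion.mpr ⟨k + 1, ⟨k + 1, Set.mem_Icc.mpr ⟨by omega, le_refl _⟩, rfl⟩⟩
  rcases hBatom hB with hYB | hYB
  · have h0 : y 0 ∈ ⋃ n, C n := hBU (hYB (hyY 0))
    obtain ⟨n, hn⟩ := mem_iUnion.mp h0
    exact hy0C n hn
  · have hB0 : B = ∅ := by
      rw [eq_empty_iff_forall_notMem] at hYB ⊢
      intro x hx; exact hYB x ⟨hx, hUY (hBU hx)⟩
    exact hUinf (by rw [hEq, hB0, empty_union]; exact hCfin n)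
end

section
/- Let X be an infinite set. Then Top(X), equipped with the subspace topology induced from the product space 2^{P(X)}, is not a locally compact space. -/
attribute [local instance] Classical.propDecidable

namespace TopSetAux

open Set Filter TopologicalSpace Topology

variable {X : Type*}

/-- initial segments of a sequence -/
def C (f : ℕ → X) (k : ℕ) : Set X := f '' Set.Iio k

lemma C_zero (f : ℕ → X) : C f 0 = ∅ := by ext x; simp [C]

lemma C_mono (f : ℕ → X) {k j : ℕ} (h : k ≤ j) : C f k ⊆ C f j :=
  Set.image_mono (fun n hn => lt_of_lt_of_le hn h)

lemma C_union (f : ℕ → X) (k j : ℕ) : C f k ∪ C f j = C f (max k j) := by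
  have : Set.Iio k ∪ Set.Iio j = Set.Iio (max k j) := by ext n; simp [lt_max_iff]
  rw [C, C, C, ← Set.image_union, this]

lemma C_inter (f : ℕ → X) (k j : ℕ) : C f k ∩ C f j = C f (min k j) := by
  rcases le_total k j with h | h
  · rw [min_eq_left h]; exact Set.inter_eq_self_of_subset_left (C_mono f h)
  · rw [min_eq_right h]; exact Set.inter_eq_self_of_subset_right (C_mono f h)

lemma C_subset_range (f : ℕ → X) (k : ℕ) : C f k ⊆ Set.range f :=
  Set.image_subset_range _ _

lemma iUnion_C (f : ℕ → X) : (⋃ k, C f k) = Set.range f := by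
  ext x
  simp only [Set.mem_iUnion, C, Set.mem_image, Set.mem_Iio, Set.mem_range]
  constructor
  · rintro ⟨k, n, -, rfl⟩; exact ⟨n, rfl⟩
  · rintro ⟨n, rfl⟩; exact ⟨n + 1, n, n.lt_succ_self, rfl⟩

section main

variable (t₀ : TopologicalSpace X) (P : Set X) (f : ℕ → X)

/-- the bounded family of sets -/
def T (N : ℕ) : Set (Set X) := {B | ∃ U, IsOpen[t₀] U ∧ ∃ k ≤ N, B = U ∪ C f k}

/-- the full (non-topology) family -/
def Afam : Set (Set X) := {B | ∃ U, IsOpen[t₀] U ∧ ∃ k, B = U ∪ C f k}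

lemma T_subset_Afam (N : ℕ) : T t₀ f N ⊆ Afam t₀ f := by
  rintro B ⟨U, hU, k, -, rfl⟩; exact ⟨U, hU, k, rfl⟩

lemma mem_T_of_mem_Afam {B : Set X} (h : B ∈ Afam t₀ f) :
    ∃ N₀, ∀ N ≥ N₀, B ∈ T t₀ f N := by
  obtain ⟨U, hU, k, rfl⟩ := h
  exact ⟨k, fun N hN => ⟨U, hU, k, hN, rfl⟩⟩

variable (hcell : ∀ B, IsOpen[t₀] B → B ∩ P = ∅ ∨ P ⊆ B) (hfP : Set.range f ⊆ P)

include hcell hfP in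
lemma inter_C {U : Set X} (hU : IsOpen[t₀] U) (j : ℕ) :
    ∃ j' ≤ j, U ∩ C f j = C f j' := by
  rcases hcell U hU with h | h
  · refine ⟨0, Nat.zero_le _, ?_⟩
    rw [C_zero]
    apply Set.eq_empty_of_subset_empty
    rw [← h]
    exact Set.inter_subset_inter_right _ ((C_subset_range f j).trans hfP)
  · exact ⟨j, le_rfl,
      Set.inter_eq_self_of_subset_right (((C_subset_range f j).trans hfP).trans h)⟩

lemma union_inter_union (a b c d : Set X) :
    (a ∪ b) ∩ (c ∪ d) = (a ∩ c) ∪ ((c ∩ b) ∪ ((a ∩ d) ∪ (b ∩ d))) := by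
  ext x; simp only [Set.mem_inter_iff, Set.mem_union]; tauto

include hcell hfP in
lemma T_inter {N : ℕ} {B B' : Set X} (hB : B ∈ T t₀ f N) (hB' : B' ∈ T t₀ f N) :
    B ∩ B' ∈ T t₀ f N := by
  obtain ⟨U, hU, k, hk, rfl⟩ := hB
  obtain ⟨U', hU', j, hj, rfl⟩ := hB'
  obtain ⟨k', hk', hk'eq⟩ := inter_C t₀ P f hcell hfP hU' k
  obtain ⟨j', hj', hj'eq⟩ := inter_C t₀ P f hcell hfP hU j
  refine ⟨U ∩ U', t₀.isOpen_inter _ _ hU hU', max k' (max j' (min k j)),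
    ?_, ?_⟩
  · exact max_le (hk'.trans hk) (max_le (hj'.trans hj) ((min_le_left k j).trans hk))
  · rw [union_inter_union, hk'eq, hj'eq, C_inter, C_union, C_union]

lemma T_sUnion {N : ℕ} (S : Set (Set X)) (hS : ∀ s ∈ S, s ∈ T t₀ f N) :
    ⋃₀ S ∈ T t₀ f N := by
  by_cases hne : S.Nonempty
  · choose U hU k hk hEq using hS
    set Ks : Set ℕ := {n | ∃ s, ∃ hs : s ∈ S, k s hs = n} with hKs
    have hbdd : BddAbove Ks := ⟨N, by rintro n ⟨s, hs, rfl⟩; exact hk s hs⟩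
    have hKne : Ks.Nonempty := by
      obtain ⟨s, hs⟩ := hne; exact ⟨k s hs, s, hs, rfl⟩
    have hmem := Nat.sSup_mem hKne hbdd
    set m := sSup Ks with hm
    set V : Set X := ⋃₀ {v | ∃ s, ∃ hs : s ∈ S, v = U s hs} with hV
    have hVopen : IsOpen[t₀] V := by
      apply t₀.isOpen_sUnion
      rintro v ⟨s, hs, rfl⟩; exact hU s hs
    refine ⟨V, hVopen, m, ?_, ?_⟩
    · obtain ⟨s, hs, hks⟩ := hmem; rw [← hks]; exact hk s hs
    · ext x
      simp only [Set.mem_sUnion, Set.mem_union, hV, Set.mem_setOf_eq]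
      constructor
      · rintro ⟨s, hs, hx⟩
        rw [hEq s hs] at hx
        rcases hx with hx | hx
        · exact Or.inl ⟨U s hs, ⟨s, hs, rfl⟩, hx⟩
        · exact Or.inr (C_mono f (le_csSup hbdd ⟨s, hs, rfl⟩) hx)
      · rintro (⟨v, ⟨s, hs, rfl⟩, hx⟩ | hx)
        · exact ⟨s, hs, (hEq s hs) ▸ Or.inl hx⟩
        · obtain ⟨s, hs, hks⟩ := hmem
          exact ⟨s, hs, (hEq s hs) ▸ Or.inr (hks ▸ hx)⟩
  · rw [Set.not_nonempty_iff_eq_empty] at hne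
    subst hne
    rw [Set.sUnion_empty]
    exact ⟨∅, (@isOpen_empty _ t₀), 0, Nat.zero_le _, by
      rw [C_zero, Set.empty_union]⟩

include hcell hfP in
/-- the approximating topologies -/
def tau (N : ℕ) : TopologicalSpace X where
  IsOpen B := B ∈ T t₀ f N
  isOpen_univ := ⟨Set.univ, t₀.isOpen_univ, 0, Nat.zero_le _, by
    rw [C_zero, Set.union_empty]⟩
  isOpen_inter _ _ h h' := T_inter t₀ P f hcell hfP h h'
  isOpen_sUnion S hS := T_sUnion t₀ f S hS

lemma isOpen_tau_iff {N : ℕ} {B : Set X} :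
    IsOpen[tau t₀ P f hcell hfP N] B ↔ B ∈ T t₀ f N := Iff.rfl

include hcell hfP in
lemma Afam_not_topology (hf : Function.Injective f)
    (hP : ∃ p ∈ P, p ∉ Set.range f) (t : TopologicalSpace X)
    (h : ∀ B, IsOpen[t] B ↔ B ∈ Afam t₀ f) : False := by
  have hC : ∀ k, IsOpen[t] (C f k) := fun k =>
    (h _).2 ⟨∅, (@isOpen_empty _ t₀), k, by rw [Set.empty_union]⟩
  have hQ : IsOpen[t] (Set.range f) := by
    rw [← iUnion_C f, ← Set.sUnion_range]
    exact t.isOpen_sUnion _ (by rintro _ ⟨k, rfl⟩; exact hC k)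
  obtain ⟨U, hU, k, hEq⟩ := (h _).1 hQ
  have hUr : U ⊆ Set.range f := hEq ▸ Set.subset_union_left
  rcases hcell U hU with h0 | h1
  · have hUe : U = ∅ := by
      rw [← Set.inter_eq_self_of_subset_left (hUr.trans hfP)]
      exact h0
    rw [hUe, Set.empty_union] at hEq
    exact (Set.infinite_range_of_injective hf) (hEq ▸ ((Set.finite_Iio k).image f))
  · obtain ⟨p, hpP, hpf⟩ := hP
    exact hpf (hUr (h1 hpP))

end main

lemma generate_cell {I0 : Set (Set X)} {P : Set X}
    (hI : ∀ A ∈ I0, ∀ x ∈ P, ∀ y ∈ P, (x ∈ A ↔ y ∈ A)) :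
    ∀ B, IsOpen[generateFrom I0] B → B ∩ P = ∅ ∨ P ⊆ B := by
  intro B hB
  have hB' : TopologicalSpace.GenerateOpen I0 B := hB
  clear hB
  induction hB' with
  | basic A hA =>
    by_cases h : (A ∩ P).Nonempty
    · obtain ⟨x, hxA, hxP⟩ := h
      exact Or.inr fun y hy => (hI A hA x hxP y hy).1 hxA
    · exact Or.inl (Set.not_nonempty_iff_eq_empty.mp h)
  | univ => exact Or.inr (Set.subset_univ _)
  | inter s t hs ht ihs iht =>
    rcases ihs with h1 | h1
    · exact Or.inl (by rw [Set.inter_assoc] at *; exact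
        Set.eq_empty_of_subset_empty (h1 ▸ Set.inter_subset_inter_right _ Set.inter_subset_right))
    · rcases iht with h2 | h2
      · exact Or.inl (Set.eq_empty_of_subset_empty (h2 ▸ (by
          intro x hx
          exact ⟨hx.1.2, hx.2⟩)))
      · exact Or.inr (Set.subset_inter h1 h2)
  | sUnion S hS ih =>
    by_cases h : ∃ s ∈ S, P ⊆ s
    · obtain ⟨s, hs, hsP⟩ := h
      exact Or.inr (hsP.trans (Set.subset_sUnion_of_mem hs))
    · push_neg at h
      refine Or.inl (Set.eq_empty_of_subset_empty ?_)
      rintro x ⟨⟨s, hs, hxs⟩, hxP⟩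
      rcases ih s hs with he | hp
      · exact he ▸ (⟨hxs, hxP⟩ : x ∈ s ∩ P)
      · exact (h s hs hp).elim

end TopSetAux

open TopSetAux Filter TopologicalSpace Topology Set in
/-- for an infinite set `X`, the subspace `Top(X)` of `2^{P(X)}`
is not locally compact. -/
theorem topSet_not_locallyCompact (X : Type*) [Infinite X] :
    ¬ LocallyCompactSpace ↥(TopSet X) := by
  intro hLC
  classical
  haveI := hLC
  -- the point corresponding to the discrete topology
  let tdisc : TopologicalSpace X :=
    { IsOpen := fun _ => True, isOpen_univ := trivial,
      isOpen_inter := fun _ _ _ _ => trivial, isOpen_sUnion := fun _ _ => trivial }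
  have hδmem : (fun _ : Set X => true) ∈ TopSet X :=
    ⟨tdisc, fun A => by constructor <;> intro <;> trivial⟩
  set δ : ↥(TopSet X) := ⟨fun _ => true, hδmem⟩ with hδ
  obtain ⟨K, hKc, hKn⟩ := exists_compact_mem_nhds δ
  rw [mem_nhds_subtype] at hKn
  obtain ⟨W, hW, hWK⟩ := hKn
  rw [nhds_pi] at hW
  simp only [nhds_discrete Bool] at hW
  obtain ⟨I0, hI0fin, tset, htset, hsub⟩ := Filter.mem_pi.mp hW
  have hKcontains : ∀ (g : Set X → Bool) (hg : g ∈ TopSet X),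
      (∀ A ∈ I0, g A = true) → (⟨g, hg⟩ : ↥(TopSet X)) ∈ K := by
    intro g hg hgI
    apply hWK
    apply hsub
    intro A hA
    have h1 : (true : Bool) ∈ tset A := htset A
    show g A ∈ tset A
    rw [hgI A hA]
    exact h1
  -- find an infinite cell of the partition generated by I0
  haveI : Finite ↥I0 := hI0fin.to_subtype
  let φ : X → (↥I0 → Bool) := fun x A => decide (x ∈ (A : Set X))
  obtain ⟨y, hy⟩ := Finite.exists_infinite_fiber φ
  set P : Set X := φ ⁻¹' {y} with hP
  have hPinf : P.Infinite := Set.infinite_coe_iff.mp hy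
  have hI : ∀ A ∈ I0, ∀ x ∈ P, ∀ y' ∈ P, (x ∈ A ↔ y' ∈ A) := by
    intro A hA x hx y' hy'
    have hx' : φ x = y := hx
    have hy'' : φ y' = y := hy'
    have hxy : φ x ⟨A, hA⟩ = φ y' ⟨A, hA⟩ := by rw [hx', hy'']
    simpa [φ, decide_eq_decide] using hxy
  set t₀ := TopologicalSpace.generateFrom I0 with ht₀
  have hcell : ∀ B, IsOpen[t₀] B → B ∩ P = ∅ ∨ P ⊆ B := TopSetAux.generate_cell hI
  let e := hPinf.natEmbedding
  let f : ℕ → X := fun n => (e (2 * n) : X)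
  have hf : Function.Injective f := by
    intro a b hab
    have h2 : e (2 * a) = e (2 * b) := Subtype.coe_injective hab
    have := e.injective h2
    omega
  have hfP : Set.range f ⊆ P := by rintro _ ⟨n, rfl⟩; exact (e (2 * n)).2
  have hPnotin : ∃ p ∈ P, p ∉ Set.range f := by
    refine ⟨(e 1 : X), (e 1).2, ?_⟩
    rintro ⟨n, hn⟩
    have h2 : e (2 * n) = e 1 := Subtype.coe_injective hn
    have := e.injective h2
    omega
  let τ : ℕ → TopologicalSpace X := TopSetAux.tau t₀ P f hcell hfP
  let χ : ℕ → (Set X → Bool) := fun N B => decide (B ∈ TopSetAux.T t₀ f N)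
  have hχmem : ∀ N, χ N ∈ TopSet X := by
    intro N
    refine ⟨τ N, fun A => ?_⟩
    show decide (A ∈ TopSetAux.T t₀ f N) = true ↔ _
    rw [decide_eq_true_iff]
    exact Iff.rfl
  let F : Set X → Bool := fun B => decide (B ∈ TopSetAux.Afam t₀ f)
  have htend : Filter.Tendsto χ Filter.atTop (nhds F) := by
    rw [tendsto_pi_nhds]
    intro B
    rw [nhds_discrete Bool, Filter.tendsto_pure]
    by_cases hB : B ∈ TopSetAux.Afam t₀ f
    · obtain ⟨N₀, hN₀⟩ := TopSetAux.mem_T_of_mem_Afam t₀ f hB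
      filter_upwards [Filter.eventually_ge_atTop N₀] with N hN
      simp [χ, F, hB, hN₀ N hN]
    · filter_upwards with N
      have hBT : B ∉ TopSetAux.T t₀ f N := fun h => hB (TopSetAux.T_subset_Afam t₀ f N h)
      simp [χ, F, hB, hBT]
  have hχK : ∀ N, χ N ∈ Subtype.val '' K := by
    intro N
    refine ⟨⟨χ N, hχmem N⟩, hKcontains _ _ (fun A hA => ?_), rfl⟩
    show decide (A ∈ TopSetAux.T t₀ f N) = true
    rw [decide_eq_true_iff]
    exact ⟨A, TopologicalSpace.GenerateOpen.basic A hA, 0, Nat.zero_le _, by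
      rw [TopSetAux.C_zero, Set.union_empty]⟩
  have hclosed : IsClosed (Subtype.val '' K) := (hKc.image continuous_subtype_val).isClosed
  have hFval : F ∈ Subtype.val '' K :=
    hclosed.mem_of_tendsto htend (Filter.Eventually.of_forall hχK)
  obtain ⟨x, hxK, hxF⟩ := hFval
  obtain ⟨t, ht⟩ := x.2
  refine TopSetAux.Afam_not_topology t₀ P f hcell hfP hf hPnotin t (fun B => ?_)
  have hFB : F B = true ↔ t.IsOpen B := by rw [← hxF]; exact ht B
  exact ⟨fun hB => decide_eq_true_iff.mp (hFB.mpr hB),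
    fun hB => hFB.mp (decide_eq_true_iff.mpr hB)⟩
end
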